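/- Suppose A is the diagonal matrix with diagonal entries d₁,…,d_n satisfying d_k + d_ℓ ≠ 0 for all k, ℓ. Then the matrix G = ∫₀^{t_F} exp(Aω) · M · Mᵀ · exp(Aᵀω) dω has entries G_{kℓ} = (exp((d_k + d_ℓ) t_F) − 1) / (d_k + d_ℓ) · (M·Mᵀ)_{kℓ} for all k, ℓ. -/

import Mathlib

open MeasureTheory intervalIntegral Matrix

/-- If `A = diag(d₁,…,d_n)` with `d_k + d_ℓ ≠ 0` for all `k, ℓ`, then the matrix
`G = ∫₀^{t_F} exp(Aω) M Mᵀ exp(Aᵀω) dω` has entries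
`G_{kℓ} = (exp((d_k + d_ℓ) t_F) − 1)/(d_k + d_ℓ) · (M Mᵀ)_{kℓ}`. -/
theorem gramian_entries_diagonal_case
    {n m : ℕ} (A : Matrix (Fin n) (Fin n) ℝ) (M : Matrix (Fin n) (Fin m) ℝ)
    (t_F : ℝ) (ht : 0 < t_F)
    (d : Fin n → ℝ) (hA : A = Matrix.diagonal d)
    (hd : ∀ k l : Fin n, d k + d l ≠ 0)
    (G : Matrix (Fin n) (Fin n) ℝ)
    (hG : G = Matrix.of fun k l => ∫ ω in (0 : ℝ)..t_F,
        (NormedSpace.exp (ω • A) * M * Mᵀ * NormedSpace.exp (ω • Aᵀ)) k l) :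
    ∀ k l : Fin n, G k l =
      (Real.exp ((d k + d l) * t_F) - 1) / (d k + d l) * (M * Mᵀ) k l := by
  intro k l
  have key : ∀ ω : ℝ,
      (NormedSpace.exp (ω • A) * M * Mᵀ * NormedSpace.exp (ω • Aᵀ)) k l
        = Real.exp ((d k + d l) * ω) * (M * Mᵀ) k l := by
    intro ω
    have h1 : ω • A = Matrix.diagonal (fun i => ω * d i) := by
      rw [hA, ← Matrix.diagonal_smul]; rfl
    have h2 : ω • Aᵀ = Matrix.diagonal (fun i => ω * d i) := by
      rw [hA, Matrix.diagonal_transpose, ← Matrix.diagonal_smul]; rfl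
    rw [h1, h2, Matrix.exp_diagonal, Matrix.mul_assoc (Matrix.diagonal _) M Mᵀ,
      Matrix.mul_diagonal, Matrix.diagonal_mul, Pi.coe_exp, Pi.coe_exp,
      ← Real.exp_eq_exp_ℝ, show (d k + d l) * ω = ω * d k + ω * d l by ring, Real.exp_add]
    ring
  rw [hG]
  simp only [Matrix.of_apply]
  rw [intervalIntegral.integral_congr (fun ω _ => key ω),
    intervalIntegral.integral_mul_const,
    intervalIntegral.integral_comp_mul_left (fun x => Real.exp x) (hd k l)]
  simp [integral_exp, div_eq_inv_mul]
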